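/- Let F be a field and A an n×n matrix over F such that λ₀ is an eigenvalue of A with p_A'(λ₀) = 0 and rank(λ₀I − A) = n − 1. Then for every right eigenvector v and left eigenvector w of A for λ₀, wᵀv = 0. -/

import Mathlib

open Matrix Polynomial

lemma eval_charpoly_aux {F : Type*} [Field F] {m : Type*} [Fintype m] [DecidableEq m]
    (M : Matrix m m F) (μ : F) :
    M.charpoly.eval μ = (μ • (1 : Matrix m m F) - M).det := by
  rw [Matrix.charpoly, ← Polynomial.coe_evalRingHom, RingHom.map_det]
  congr 1
  ext i j
  by_cases h : i = j <;>
    simp [charmatrix_apply, Matrix.one_apply, h, Matrix.diagonal_apply, Matrix.map_apply]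

/-- If `λ₀` is an eigenvalue of `A` with `p_A'(λ₀) = 0` and `rank(λ₀ I − A) = n − 1`,
then `wᵀ v = 0` for every right eigenvector `v` and left eigenvector `w` of `A` for `λ₀`. -/
theorem dot_eq_zero_of_derivative_eval_zero
    {F : Type*} [Field F] {n : ℕ} (A : Matrix (Fin n) (Fin n) F) (lam0 : F)
    (hev : A.charpoly.eval lam0 = 0)
    (hder : (Polynomial.derivative A.charpoly).eval lam0 = 0)
    (hrank : (lam0 • (1 : Matrix (Fin n) (Fin n) F) - A).rank = n - 1) :
    ∀ v w : Fin n → F, v ≠ 0 → A.mulVec v = lam0 • v →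
      w ≠ 0 → A.vecMul w = lam0 • w → w ⬝ᵥ v = 0 := by
  intro v w hv0 hv hw0 hw
  by_contra hcon
  set B : Matrix (Fin n) (Fin n) F := lam0 • (1 : Matrix (Fin n) (Fin n) F) - A with hB
  have hn : 1 ≤ n := by
    rcases Nat.eq_zero_or_pos n with h | h
    · subst h; exact absurd (Subsingleton.elim v 0) hv0
    · exact h
  set f : Module.End F (Fin n → F) := A.mulVecLin with hf
  set g : Module.End F (Fin n → F) := B.mulVecLin with hg
  have hgx : ∀ x, g x = lam0 • x - f x := by
    intro x
    simp [hg, hf, hB, Matrix.sub_mulVec, Matrix.smul_mulVec, Matrix.one_mulVec]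
  have hgv : g v = 0 := by rw [hgx, show f v = A.mulVec v from rfl, hv, sub_self]
  have hwg : ∀ x, w ⬝ᵥ g x = 0 := by
    intro x
    have hw1 : w ᵥ* (lam0 • (1 : Matrix (Fin n) (Fin n) F)) = lam0 • w := by
      rw [Matrix.smul_one_eq_diagonal]
      ext i
      rw [Matrix.vecMul_diagonal]
      simp [mul_comm]
    have hwB : Matrix.vecMul w B = 0 := by
      rw [hB, Matrix.vecMul_sub, hw1, hw, sub_self]
    rw [show g x = B.mulVec x from rfl, Matrix.dotProduct_mulVec, hwB, zero_dotProduct]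
  set V : Submodule F (Fin n → F) := LinearMap.ker g with hV
  set W : Submodule F (Fin n → F) := LinearMap.range g with hW
  have hfinW : Module.finrank F W = n - 1 := hrank
  have hsum : Module.finrank F W + Module.finrank F V = n := by
    rw [hV, hW, LinearMap.finrank_range_add_finrank_ker g, Module.finrank_fin_fun]
  have hfinV : Module.finrank F V = 1 := by omega
  have hvV : v ∈ V := hgv
  have hVspan : V = Submodule.span F {v} := by
    refine (Submodule.eq_of_le_of_finrank_eq ?_ ?_).symm
    · rw [Submodule.span_le, Set.singleton_subset_iff]; exact hvV
    · rw [finrank_span_singleton hv0, hfinV]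
  have hbot : V ⊓ W = ⊥ := by
    rw [Submodule.eq_bot_iff]
    rintro x ⟨hxV, hxW⟩
    rw [hVspan] at hxV
    obtain ⟨c, hc⟩ := Submodule.mem_span_singleton.mp hxV
    obtain ⟨y, hy⟩ := hxW
    have h1 : w ⬝ᵥ x = 0 := by rw [← hy]; exact hwg y
    rw [← hc, dotProduct_smul, smul_eq_mul, mul_eq_zero] at h1
    rcases h1 with h1 | h1
    · rw [← hc, h1, zero_smul]
    · exact absurd h1 hcon
  have hcompl : IsCompl V W := by
    constructor
    · rw [disjoint_iff]; exact hbot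
    · rw [codisjoint_iff]
      apply Submodule.eq_top_of_finrank_eq
      have h2 := Submodule.finrank_sup_add_finrank_inf_eq V W
      rw [hbot] at h2
      simp only [finrank_bot, add_zero] at h2
      rw [h2, hfinV, hfinW, Module.finrank_fin_fun]
      omega
  have hcomm : ∀ x, g (f x) = f (g x) := by
    intro x
    show B.mulVec (A.mulVec x) = A.mulVec (B.mulVec x)
    rw [Matrix.mulVec_mulVec, Matrix.mulVec_mulVec, hB, Matrix.sub_mul, Matrix.mul_sub, Matrix.smul_mul, Matrix.mul_smul,
      Matrix.one_mul, Matrix.mul_one]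
  have hfV : ∀ x ∈ V, f x ∈ V := by
    intro x hx
    have hx' : g x = 0 := hx
    show g (f x) = 0
    rw [hcomm, hx', map_zero]
  have hfW : ∀ x ∈ W, f x ∈ W := by
    rintro x ⟨y, rfl⟩
    exact ⟨f y, hcomm y⟩
  set FF := f.restrict hfV with hFF
  set GG := f.restrict hfW with hGG
  -- lam0 is not an eigenvalue of GG
  have hGGeval : GG.charpoly.eval lam0 ≠ 0 := by
    intro habs
    set b := Module.finBasis F W with hb
    set M := LinearMap.toMatrix b b GG with hM
    have hMc : M.charpoly = GG.charpoly := LinearMap.charpoly_toMatrix GG b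
    rw [← hMc, eval_charpoly_aux] at habs
    obtain ⟨x, hx0, hxz⟩ := (Matrix.exists_mulVec_eq_zero_iff).mpr habs
    have hxM : M.mulVec x = lam0 • x := by
      rw [Matrix.sub_mulVec, Matrix.smul_mulVec, Matrix.one_mulVec, sub_eq_zero] at hxz
      exact hxz.symm
    set u : W := b.equivFun.symm x with hu
    have hu0 : u ≠ 0 := fun h => hx0 (b.equivFun.symm.map_eq_zero_iff.mp h)
    have hrepr : ⇑(b.repr u) = x := by
      have h3 : b.equivFun u = x := b.equivFun.apply_symm_apply x
      funext i
      rw [← h3, Module.Basis.equivFun_apply]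
    have hGu : GG u = lam0 • u := by
      have h1 : GG u = Matrix.toLin b b M u := by rw [hM, Matrix.toLin_toMatrix]
      rw [h1, Matrix.toLin_apply, hrepr, hxM, hu, Module.Basis.equivFun_symm_apply, Finset.smul_sum]
      refine Finset.sum_congr rfl fun j _ => ?_
      rw [Pi.smul_apply, smul_smul, smul_eq_mul]
    have hfu : f u.1 = lam0 • u.1 := by
      have h4 := congrArg Subtype.val hGu
      simpa [hGG, LinearMap.restrict_apply] using h4
    have huV : u.1 ∈ V := by
      show g u.1 = 0
      rw [hgx, hfu, sub_self]
    have h5 : u.1 ∈ V ⊓ W := ⟨huV, u.2⟩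
    rw [hbot] at h5
    exact hu0 (Subtype.ext h5)
  -- charpoly splits
  have hAf : A.charpoly = f.charpoly := by
    have hfl : f = Matrix.toLin (Pi.basisFun F (Fin n)) (Pi.basisFun F (Fin n)) A := by
      refine LinearMap.ext fun x => ?_
      rw [Matrix.toLin_eq_toLin', Matrix.toLin'_apply]
      rfl
    rw [← LinearMap.charpoly_toMatrix f (Pi.basisFun F (Fin n)), hfl,
      LinearMap.toMatrix_toLin]
  have hsplit : A.charpoly = FF.charpoly * GG.charpoly := by
    let e := Submodule.prodEquivOfIsCompl V W hcompl
    have hψ : FF.prodMap GG = e.symm.conj f := by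
      refine LinearMap.ext fun p => ?_
      show (FF p.1, GG p.2) = e.symm (f (e p))
      rw [LinearEquiv.eq_symm_apply]
      show e (FF p.1, GG p.2) = f (e p)
      rw [Submodule.coe_prodEquivOfIsCompl', Submodule.coe_prodEquivOfIsCompl', map_add]
      congr 1
    rw [hAf, ← e.symm.charpoly_conj f, ← hψ, LinearMap.charpoly_prodMap]
  have hFFdeg : FF.charpoly.natDegree = 1 := by
    rw [LinearMap.charpoly_natDegree, hfinV]
  have hFFeq : FF.charpoly = X + C (FF.charpoly.coeff 0) :=
    (LinearMap.charpoly_monic FF).eq_X_add_C hFFdeg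
  set c := FF.charpoly.coeff 0 with hc
  have hroot : lam0 + c = 0 := by
    rw [hsplit, eval_mul, hFFeq] at hev
    simp only [eval_add, eval_X, eval_C] at hev
    rcases mul_eq_zero.mp hev with h | h
    · exact h
    · exact absurd h hGGeval
  have hfinal : (Polynomial.derivative A.charpoly).eval lam0 = GG.charpoly.eval lam0 := by
    rw [hsplit, hFFeq, derivative_mul]
    simp only [derivative_add, derivative_X, derivative_C, add_zero, eval_add, eval_mul,
      eval_one, eval_X, eval_C, one_mul]
    rw [hroot, zero_mul, add_zero]
  rw [hder] at hfinal
  exact hGGeval hfinal.symm
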